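/- Suppose r > 0, d > 0, σ > 0 and K > 0, and set b := ((λ/σ − κ)/(λ/σ − κ − 1))·K. Define f(x) := (x − K)(K/x)^{λ/σ − κ} + ((K/x)^{−(λ+κσ)/σ}·(x(1 − (x/K)^{−2λ/σ})σ − (x − K)(λ − κσ + (K/x)^{2λ/σ}(λ + κσ))))/(2λ). Then f(x) ≥ 0 for all x ∈ [K, b]. -/

import Mathlib

noncomputable section

/-- The function `f` from the penalty-comparison argument is non-negative on `[K, b]`,
where `b` is the perpetual American call exercise boundary. -/
theorem f_nonneg_on_K_b (r d σ K : ℝ)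
    (hr : 0 < r) (hd : 0 < d) (hσ : 0 < σ) (hK : 0 < K)
    (lam κ b : ℝ)
    (hlam : lam = Real.sqrt (2 * r + ((r - d - σ ^ 2 / 2) / σ) ^ 2))
    (hκ : κ = (r - d - σ ^ 2 / 2) / σ ^ 2)
    (hb : b = ((lam / σ - κ) / (lam / σ - κ - 1)) * K)
    (f : ℝ → ℝ)
    (hf : f = fun x =>
      (x - K) * (K / x) ^ (lam / σ - κ) +
        ((K / x) ^ (-((lam + κ * σ) / σ)) *
            (x * (1 - (x / K) ^ (-(2 * lam / σ))) * σ -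
              (x - K) * (lam - κ * σ + (K / x) ^ (2 * lam / σ) * (lam + κ * σ)))) /
          (2 * lam)) :
    ∀ x ∈ Set.Icc K b, 0 ≤ f x := by
  have hσ0 : σ ≠ 0 := ne_of_gt hσ
  have hlam0 : 0 < lam := by
    rw [hlam]; apply Real.sqrt_pos.mpr; positivity
  have hlam2 : lam ^ 2 = 2 * r + κ ^ 2 * σ ^ 2 := by
    rw [hlam, Real.sq_sqrt (by positivity), hκ]
    field_simp
  have hκσ : κ * σ ^ 2 = r - d - σ ^ 2 / 2 := by rw [hκ]; field_simp
  set p : ℝ := lam / σ - κ with hp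
  set q : ℝ := lam / σ + κ with hq
  have hpq : p + q = 2 * lam / σ := by rw [hp, hq]; ring
  have hpq0 : 0 < p + q := by rw [hpq]; positivity
  have hkey : σ + σ * κ < lam := by
    by_contra h
    push_neg at h
    have h2 : lam * lam ≤ (σ + σ * κ) * (σ + σ * κ) :=
      mul_self_le_mul_self (le_of_lt hlam0) h
    nlinarith [hlam2, hκσ, hd]
  have hp1 : 1 < p := by
    rw [hp, lt_sub_iff_add_lt, lt_div_iff₀ hσ]
    nlinarith [hkey]
  intro x hx
  obtain ⟨hKx, hxb⟩ := hx
  have hx0 : 0 < x := lt_of_lt_of_le hK hKx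
  have ht0 : 0 < K / x := by positivity
  have ht1 : K / x ≤ 1 := by rw [div_le_one hx0]; exact hKx
  set t : ℝ := K / x with htdef
  set B : ℝ := t ^ (-q) with hBdef
  set C : ℝ := t ^ (p + q) with hCdef
  have hB0 : 0 < B := Real.rpow_pos_of_pos ht0 _
  have hC1 : C ≤ 1 := Real.rpow_le_one (le_of_lt ht0) ht1 (le_of_lt hpq0)
  have hBC : B * C = t ^ p := by
    rw [hBdef, hCdef, ← Real.rpow_add ht0]; ring_nf
  have hxpb : 0 ≤ x - p * (x - K) := by
    rw [hb, div_mul_eq_mul_div, le_div_iff₀ (by linarith : (0:ℝ) < p - 1)] at hxb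
    nlinarith [hxb]
  have e2 : -((lam + κ * σ) / σ) = -q := by rw [hq]; field_simp
  have e3 : (x / K : ℝ) ^ (-(2 * lam / σ)) = C := by
    rw [Real.rpow_neg (by positivity), show (x / K : ℝ) = (K / x)⁻¹ from (inv_div _ _).symm,
      Real.inv_rpow (le_of_lt ht0), inv_inv, hCdef, hpq, htdef]
  have ha : lam - κ * σ = σ * p := by rw [hp]; field_simp; try ring
  have hb2 : lam + κ * σ = σ * q := by rw [hq]; field_simp; try ring
  have hc : 2 * lam = σ * (p + q) := by rw [hpq]; field_simp; try ring
  have hfx : f x = B * (1 - C) * (x - p * (x - K)) / (p + q) := by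
    rw [hf]
    simp only
    rw [e2, e3, show (2 : ℝ) * lam / σ = p + q from hpq.symm,
      ← hBdef, ← hCdef, ← hBC, ha, hb2, hc]
    field_simp
    ring
  rw [hfx]
  apply div_nonneg _ (le_of_lt hpq0)
  exact mul_nonneg (mul_nonneg (le_of_lt hB0) (by linarith)) hxpb

end
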